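/- At every grid point x, the gradient of Q vanishes: ∇Q(x) = 0. -/

import Mathlib

open scoped BigOperators

noncomputable def Q (F R : ℕ) (y : EuclideanSpace ℝ (Fin F × Fin R)) : ℝ :=
  -(1/2) * ∑ r : Fin R,
    ((∑ φ : Fin F, (y (φ, r))^2 - 1)^2 + ∑ φ : Fin F, (y (φ, r))^2 * (1 - y (φ, r))^2)

def IsGridPoint (F R : ℕ) (x : EuclideanSpace ℝ (Fin F × Fin R)) : Prop :=
  ∀ r : Fin R, ∃! φ : Fin F, x (φ, r) = 1 ∧ ∀ φ' : Fin F, φ' ≠ φ → x (φ', r) = 0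

lemma hasFDerivAt_sq' {E : Type*} [NormedAddCommGroup E] [NormedSpace ℝ E]
    {f : E → ℝ} {f' : E →L[ℝ] ℝ} {x : E} (hf : HasFDerivAt f f' x) :
    HasFDerivAt (fun y => f y ^ 2) ((2 * f x) • f') x := by
  have h := hf.fun_mul hf
  have hfun : (fun y => f y * f y) = fun y => f y ^ 2 := by funext y; ring
  have hder : f x • f' + f x • f' = (2 * f x) • f' := by
    rw [two_mul, add_smul]
  rw [hfun, hder] at h
  exact h

theorem stmt_5 (F R : ℕ) (hF : 0 < F) (hR : 0 < R)
    (x : EuclideanSpace ℝ (Fin F × Fin R)) (hx : IsGridPoint F R x) :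
    gradient (Q F R) x = 0 := by
  have hproj : ∀ p : Fin F × Fin R, HasFDerivAt
      (fun y : EuclideanSpace ℝ (Fin F × Fin R) => y p)
      (EuclideanSpace.proj p : EuclideanSpace ℝ (Fin F × Fin R) →L[ℝ] ℝ) x := by
    intro p
    exact (EuclideanSpace.proj p : EuclideanSpace ℝ (Fin F × Fin R) →L[ℝ] ℝ).hasFDerivAt
  have hterm : ∀ r : Fin R, HasFDerivAt
      (fun y : EuclideanSpace ℝ (Fin F × Fin R) =>
        (∑ φ : Fin F, (y (φ, r))^2 - 1)^2 + ∑ φ : Fin F, (y (φ, r))^2 * (1 - y (φ, r))^2)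
      (0 : EuclideanSpace ℝ (Fin F × Fin R) →L[ℝ] ℝ) x := by
    intro r
    obtain ⟨φ0, ⟨h1, h0⟩, _⟩ := hx r
    have hval : ∀ φ : Fin F, x (φ, r) = 0 ∨ x (φ, r) = 1 := by
      intro φ
      by_cases h : φ = φ0
      · right; rw [h]; exact h1
      · left; exact h0 φ h
    have hsum : ∑ φ : Fin F, (x (φ, r))^2 = 1 := by
      rw [Finset.sum_eq_single φ0]
      · rw [h1]; ring
      · intro b _ hb; rw [h0 b hb]; ring
      · intro hb; exact absurd (Finset.mem_univ φ0) hb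
    have hA : HasFDerivAt
        (fun y : EuclideanSpace ℝ (Fin F × Fin R) => ∑ φ : Fin F, (y (φ, r))^2 - 1)
        (∑ φ : Fin F, (2 * x (φ, r)) • (EuclideanSpace.proj ((φ, r) : Fin F × Fin R)
          : EuclideanSpace ℝ (Fin F × Fin R) →L[ℝ] ℝ)) x := by
      have := (HasFDerivAt.fun_sum
        (fun φ (_ : φ ∈ Finset.univ) => hasFDerivAt_sq' (hproj (φ, r)))).sub_const (1 : ℝ)
      simpa using this
    have hA2 : HasFDerivAt
        (fun y : EuclideanSpace ℝ (Fin F × Fin R) => (∑ φ : Fin F, (y (φ, r))^2 - 1)^2)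
        (0 : EuclideanSpace ℝ (Fin F × Fin R) →L[ℝ] ℝ) x := by
      have h2 := hasFDerivAt_sq' hA
      simp only [hsum, sub_self, mul_zero, zero_smul] at h2
      exact h2
    have hB : ∀ φ : Fin F, HasFDerivAt
        (fun y : EuclideanSpace ℝ (Fin F × Fin R) => (y (φ, r))^2 * (1 - y (φ, r))^2)
        (0 : EuclideanSpace ℝ (Fin F × Fin R) →L[ℝ] ℝ) x := by
      intro φ
      have hu := hproj (φ, r)
      have h2 := (hasFDerivAt_sq' hu).fun_mul (hasFDerivAt_sq' (hu.const_sub 1))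
      rcases hval φ with h | h <;>
      · simp only [h] at h2
        simpa using h2
    have hBsum : HasFDerivAt
        (fun y : EuclideanSpace ℝ (Fin F × Fin R) =>
          ∑ φ : Fin F, (y (φ, r))^2 * (1 - y (φ, r))^2)
        (0 : EuclideanSpace ℝ (Fin F × Fin R) →L[ℝ] ℝ) x := by
      have := HasFDerivAt.fun_sum (fun φ (_ : φ ∈ Finset.univ) => hB φ)
      simpa using this
    simpa using hA2.fun_add hBsum
  have key : HasFDerivAt (Q F R) (0 : EuclideanSpace ℝ (Fin F × Fin R) →L[ℝ] ℝ) x := by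
    have hs := HasFDerivAt.fun_sum (fun r (_ : r ∈ Finset.univ) => hterm r)
    have h2 := hs.const_mul (-(1/2) : ℝ)
    have hz : ((-(1/2) : ℝ)) • (∑ _r : Fin R, (0 : EuclideanSpace ℝ (Fin F × Fin R) →L[ℝ] ℝ))
        = 0 := by simp
    rw [hz] at h2
    exact h2
  have hfd : fderiv ℝ (Q F R) x = 0 := key.fderiv
  simp [gradient, hfd]
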